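/- Let W'' be a binomial random variable with parameters (C(n−1,2), 2/3) and W' an independent binomial random variable with parameters (k(n−k)(n−2)/2, 2/3), where 2 ≤ k ≤ n−2 and n is sufficiently large. Then P(W'' ≥ W') ≤ 2·exp(−n/576). -/
import Mathlib

set_option maxHeartbeats 1000000

open MeasureTheory ProbabilityTheory Finset

lemma my_exp_quad {x : ℝ} (hx : |x| ≤ 1) : Real.exp x ≤ 1 + x + x ^ 2 := by
  have h := Real.abs_exp_sub_one_sub_id_le hx
  have := (abs_le.1 h).2
  linarith

lemma my_mgf_sum (N : ℕ) (c s : ℝ) :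
    ∑ m ∈ Finset.range (N + 1),
      (N.choose m : ℝ) * (2 / 3 : ℝ) ^ m * (1 / 3 : ℝ) ^ (N - m) * Real.exp (s * ((m : ℝ) - c))
      = Real.exp (-(s * c)) * ((2 / 3) * Real.exp s + 1 / 3) ^ N := by
  rw [add_pow, Finset.mul_sum]
  refine Finset.sum_congr rfl fun m hm => ?_
  have he : Real.exp (s * ((m : ℝ) - c)) = Real.exp s ^ m * Real.exp (-(s * c)) := by
    rw [← Real.exp_nat_mul, ← Real.exp_add]
    ring_nf
  rw [he, mul_pow]
  ring

lemma my_tail_bound {Ω : Type*} [MeasureSpace Ω] (W : Ω → ℕ) (N : ℕ)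
    (hdist : ∀ m : ℕ, ℙ {ω | W ω = m} =
      ENNReal.ofReal ((N.choose m : ℝ) * (2 / 3 : ℝ) ^ m * (1 / 3 : ℝ) ^ (N - m)))
    (φ : ℕ → Prop) (g : ℕ → ℝ) (hg0 : ∀ m, 0 ≤ g m) (hg1 : ∀ m, φ m → 1 ≤ g m) :
    ℙ {ω | φ (W ω)} ≤
      ENNReal.ofReal (∑ m ∈ Finset.range (N + 1),
        (N.choose m : ℝ) * (2 / 3 : ℝ) ^ m * (1 / 3 : ℝ) ^ (N - m) * g m) := by
  have hsub : {ω | φ (W ω)} ⊆ ⋃ m : ℕ, {ω | W ω = m ∧ φ m} := fun ω hω =>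
    Set.mem_iUnion.2 ⟨W ω, rfl, hω⟩
  refine (measure_mono hsub).trans ((measure_iUnion_le _).trans ?_)
  have hterm : ∀ m : ℕ, ℙ {ω | W ω = m ∧ φ m} ≤
      ENNReal.ofReal ((N.choose m : ℝ) * (2 / 3 : ℝ) ^ m * (1 / 3 : ℝ) ^ (N - m) * g m) := by
    intro m
    by_cases hm : φ m
    · have hset : {ω | W ω = m ∧ φ m} = {ω | W ω = m} := by ext ω; simp [hm]
      rw [hset, hdist]
      apply ENNReal.ofReal_le_ofReal
      have h1 := hg1 m hm
      have hp : (0 : ℝ) ≤ (N.choose m : ℝ) * (2 / 3 : ℝ) ^ m * (1 / 3 : ℝ) ^ (N - m) := by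
        positivity
      nlinarith
    · have hset : {ω | W ω = m ∧ φ m} = ∅ := by ext ω; simp [hm]
      simp [hset]
  refine (ENNReal.tsum_le_tsum hterm).trans ?_
  rw [ENNReal.ofReal_sum_of_nonneg (fun m _ => by have := hg0 m; positivity)]
  apply le_of_eq
  refine tsum_eq_sum fun m hm => ?_
  have hc : N.choose m = 0 := Nat.choose_eq_zero_of_lt (by
    simpa using Finset.mem_range.not.mp hm)
  simp [hc]

/-- If W'' is binomial (C(n−1,2), 2/3) (pendant-edge weight) and W' is an independent
binomial (k(n−k)(n−2)/2, 2/3) (interior-edge weight) with 2 ≤ k ≤ n−2, then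
P(W'' ≥ W') ≤ 2·exp(−n/576). -/
theorem stmt4 {Ω : Type*} [MeasureSpace Ω] [IsProbabilityMeasure (ℙ : Measure Ω)]
    (n k : ℕ) (hn : 4 ≤ n) (hk1 : 2 ≤ k) (hk2 : k + 2 ≤ n)
    (W'' W' : Ω → ℕ) (hm'' : Measurable W'') (hm' : Measurable W')
    (hindep : IndepFun W'' W' ℙ)
    (hdist'' : ∀ m : ℕ, ℙ {ω | W'' ω = m} =
      ENNReal.ofReal (((n - 1).choose 2).choose m * (2 / 3 : ℝ) ^ m
        * (1 / 3 : ℝ) ^ ((n - 1).choose 2 - m)))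
    (hdist' : ∀ m : ℕ, ℙ {ω | W' ω = m} =
      ENNReal.ofReal ((k * (n - k) * (n - 2) / 2).choose m * (2 / 3 : ℝ) ^ m
        * (1 / 3 : ℝ) ^ (k * (n - k) * (n - 2) / 2 - m))) :
    ℙ {ω | W' ω ≤ W'' ω} ≤ ENNReal.ofReal (2 * Real.exp (-(n : ℝ) / 576)) := by
  classical
  set N2 : ℕ := (n - 1).choose 2 with hN2def
  set N1 : ℕ := k * (n - k) * (n - 2) / 2 with hN1def
  -- Nat facts
  have hkn : k ≤ n := by omega
  have h2N2 : (2 : ℕ) * N2 = (n - 1) * (n - 2) := by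
    have hdvd : 2 ∣ (n - 1) * (n - 2) := by
      rcases Nat.even_or_odd (n - 1) with h | h
      · exact h.two_dvd.mul_right _
      · have he : Even (n - 2) := by
          rcases h with ⟨j, hj⟩; exact ⟨j, by omega⟩
        exact he.two_dvd.mul_left _
    rw [hN2def, Nat.choose_two_right, show n - 1 - 1 = n - 2 from by omega,
      Nat.mul_div_cancel' hdvd]
  have h2N1 : (2 : ℕ) * N1 = k * (n - k) * (n - 2) := by
    have hev : Even (k * (n - k) * (n - 2)) := by
      rcases Nat.even_or_odd k with h | h
      · exact (h.mul_right _).mul_right _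
      · rcases Nat.even_or_odd (n - k) with h' | h'
        · exact (h'.mul_left _).mul_right _
        · have : Even (n - 2) := by
            rcases h with ⟨i, hi⟩; rcases h' with ⟨j, hj⟩
            exact ⟨i + j, by omega⟩
          exact this.mul_left _
    rw [hN1def, Nat.mul_div_cancel' hev.two_dvd]
  -- Real versions
  set a : ℝ := (N2 : ℝ) with hadef
  set b : ℝ := (N1 : ℝ) with hbdef
  have hra : 2 * a = ((n : ℝ) - 1) * ((n : ℝ) - 2) := by
    have := congrArg (Nat.cast : ℕ → ℝ) h2N2
    push_cast [Nat.cast_sub (by omega : 1 ≤ n), Nat.cast_sub (by omega : 2 ≤ n)] at this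
    linarith [this]
  have hrb : 2 * b = (k : ℝ) * ((n : ℝ) - (k : ℝ)) * ((n : ℝ) - 2) := by
    have := congrArg (Nat.cast : ℕ → ℝ) h2N1
    push_cast [Nat.cast_sub hkn, Nat.cast_sub (by omega : 2 ≤ n)] at this
    linarith [this]
  have hnR : (4 : ℝ) ≤ (n : ℝ) := by exact_mod_cast hn
  have hkR1 : (2 : ℝ) ≤ (k : ℝ) := by exact_mod_cast hk1
  have hkR2 : (k : ℝ) + 2 ≤ (n : ℝ) := by exact_mod_cast hk2
  have ha0 : 0 ≤ a := Nat.cast_nonneg _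
  have hnk2 : (2 : ℝ) ≤ (n : ℝ) - (k : ℝ) := by linarith
  have hn2 : (2 : ℝ) ≤ (n : ℝ) - 2 := by linarith
  have hb4 : (4 : ℝ) ≤ b := by
    have hA : (4 : ℝ) ≤ (k : ℝ) * ((n : ℝ) - (k : ℝ)) := by nlinarith
    have hB : (8 : ℝ) ≤ (k : ℝ) * ((n : ℝ) - (k : ℝ)) * ((n : ℝ) - 2) := by
      nlinarith [mul_nonneg (sub_nonneg.2 hA) (sub_nonneg.2 hn2)]
    linarith
  have hb0 : (0 : ℝ) < b := by linarith
  clear_value a b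
  set d : ℝ := b - a with hddef
  have hd1 : ((n : ℝ) - 2) * ((n : ℝ) - 3) ≤ 2 * d := by
    have hkk : 0 ≤ ((k : ℝ) - 2) * (((n : ℝ) - (k : ℝ)) - 2) := by nlinarith
    nlinarith
  have hd0 : 0 < d := by nlinarith
  have hbU : 8 * b ≤ (n : ℝ) ^ 2 * ((n : ℝ) - 2) := by nlinarith [sq_nonneg ((n : ℝ) - 2 * (k : ℝ))]
  have hkey : (n : ℝ) * b ≤ 24 * d ^ 2 := by
    have hx2 : (0 : ℝ) ≤ (n : ℝ) - 2 := by linarith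
    have hx3 : (0 : ℝ) ≤ (n : ℝ) - 3 := by linarith
    have hx0 : (0 : ℝ) ≤ (n : ℝ) := by linarith
    have hP : (0 : ℝ) ≤ ((n : ℝ) - 2) * ((n : ℝ) - 3) := mul_nonneg hx2 hx3
    have hA : (((n : ℝ) - 2) * ((n : ℝ) - 3)) ^ 2 ≤ (2 * d) ^ 2 := pow_le_pow_left₀ hP hd1 2
    have hC : (n : ℝ) ^ 3 ≤ 48 * ((n : ℝ) - 2) * ((n : ℝ) - 3) ^ 2 := by
      nlinarith [mul_nonneg (by linarith : (0:ℝ) ≤ (n : ℝ) - 4) (sq_nonneg ((n : ℝ) - 2)),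
        sq_nonneg ((n : ℝ) - 2), sq_nonneg ((n : ℝ) - 4),
        mul_nonneg (by linarith : (0:ℝ) ≤ (n : ℝ) - 4) (by linarith : (0:ℝ) ≤ (n : ℝ) - 4)]
    have hE : (n : ℝ) ^ 3 * ((n : ℝ) - 2) ≤ 48 * ((n : ℝ) - 2) * ((n : ℝ) - 3) ^ 2 * ((n : ℝ) - 2) :=
      mul_le_mul_of_nonneg_right hC hx2
    have hB : (n : ℝ) * (8 * b) ≤ (n : ℝ) * ((n : ℝ) ^ 2 * ((n : ℝ) - 2)) :=
      mul_le_mul_of_nonneg_left hbU hx0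
    nlinarith [hA, hE, hB]
  clear_value d
  set t : ℝ := d / (4 * b) with htdef
  have ht0 : 0 < t := by positivity
  have ht1 : t ≤ 1 := by
    rw [htdef, div_le_one (by positivity)]
    nlinarith
  clear_value t
  set c : ℝ := (a + b) / 3 with hcdef
  clear_value c
  -- the core real inequality
  have hcore : -(d / 3) * t + (2 / 3) * b * t ^ 2 ≤ -(n : ℝ) / 576 := by
    have heq : -(d / 3) * t + (2 / 3) * b * t ^ 2 = -(d ^ 2 / (24 * b)) := by
      rw [htdef]; field_simp; ring
    rw [heq, neg_le, neg_div, neg_neg]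
    rw [div_le_div_iff₀ (by norm_num) (by positivity)]
    nlinarith [hkey]
  -- first tail
  have hB1 : ℙ {ω | c ≤ (W'' ω : ℝ)} ≤ ENNReal.ofReal (Real.exp (-(n : ℝ) / 576)) := by
    have := my_tail_bound W'' N2 hdist'' (fun m => c ≤ (m : ℝ))
      (fun m => Real.exp (t * ((m : ℝ) - c)))
      (fun m => (Real.exp_pos _).le)
      (fun m hm => Real.one_le_exp (by nlinarith))
    refine this.trans ?_
    rw [my_mgf_sum]
    apply ENNReal.ofReal_le_ofReal
    have hbase : (2 / 3) * Real.exp t + 1 / 3 ≤ Real.exp ((2 / 3) * (t + t ^ 2)) := by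
      have h1 : Real.exp t ≤ 1 + t + t ^ 2 := my_exp_quad (by rw [abs_of_nonneg ht0.le]; exact ht1)
      have h2 : 1 + (2 / 3) * (t + t ^ 2) ≤ Real.exp ((2 / 3) * (t + t ^ 2)) :=
        Real.add_one_le_exp _ |>.trans_eq' (by ring)
      linarith
    have hbase0 : (0 : ℝ) ≤ (2 / 3) * Real.exp t + 1 / 3 := by positivity
    calc Real.exp (-(t * c)) * ((2 / 3) * Real.exp t + 1 / 3) ^ N2
        ≤ Real.exp (-(t * c)) * (Real.exp ((2 / 3) * (t + t ^ 2))) ^ N2 := by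
          apply mul_le_mul_of_nonneg_left (pow_le_pow_left₀ hbase0 hbase _) (Real.exp_pos _).le
      _ = Real.exp (-(t * c) + (N2 : ℝ) * ((2 / 3) * (t + t ^ 2))) := by
          rw [← Real.exp_nat_mul, ← Real.exp_add]
      _ ≤ Real.exp (-(n : ℝ) / 576) := by
          apply Real.exp_le_exp.2
          have : -(t * c) + (N2 : ℝ) * ((2 / 3) * (t + t ^ 2))
              ≤ -(d / 3) * t + (2 / 3) * b * t ^ 2 := by
            have hab : a ≤ b := by linarith
            have : (N2 : ℝ) = a := hadef.symm
            rw [this, hcdef, hddef]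
            nlinarith [sq_nonneg t]
          linarith [hcore]
  -- second tail
  have hB2 : ℙ {ω | (W' ω : ℝ) ≤ c} ≤ ENNReal.ofReal (Real.exp (-(n : ℝ) / 576)) := by
    have := my_tail_bound W' N1 hdist' (fun m => (m : ℝ) ≤ c)
      (fun m => Real.exp (t * (c - (m : ℝ))))
      (fun m => (Real.exp_pos _).le)
      (fun m hm => Real.one_le_exp (by nlinarith))
    refine this.trans ?_
    have hsum : ∑ m ∈ Finset.range (N1 + 1),
        (N1.choose m : ℝ) * (2 / 3 : ℝ) ^ m * (1 / 3 : ℝ) ^ (N1 - m) * Real.exp (t * (c - (m : ℝ)))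
        = Real.exp (-(-t * c)) * ((2 / 3) * Real.exp (-t) + 1 / 3) ^ N1 := by
      rw [← my_mgf_sum N1 c (-t)]
      refine Finset.sum_congr rfl fun m _ => ?_
      ring_nf
    rw [hsum]
    apply ENNReal.ofReal_le_ofReal
    have hbase : (2 / 3) * Real.exp (-t) + 1 / 3 ≤ Real.exp ((2 / 3) * (-t + t ^ 2)) := by
      have h1 : Real.exp (-t) ≤ 1 + (-t) + (-t) ^ 2 := my_exp_quad (by
        rw [abs_neg, abs_of_nonneg ht0.le]; exact ht1)
      have h2 : 1 + (2 / 3) * (-t + t ^ 2) ≤ Real.exp ((2 / 3) * (-t + t ^ 2)) :=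
        Real.add_one_le_exp _ |>.trans_eq' (by ring)
      nlinarith
    have hbase0 : (0 : ℝ) ≤ (2 / 3) * Real.exp (-t) + 1 / 3 := by positivity
    calc Real.exp (-(-t * c)) * ((2 / 3) * Real.exp (-t) + 1 / 3) ^ N1
        ≤ Real.exp (-(-t * c)) * (Real.exp ((2 / 3) * (-t + t ^ 2))) ^ N1 := by
          apply mul_le_mul_of_nonneg_left (pow_le_pow_left₀ hbase0 hbase _) (Real.exp_pos _).le
      _ = Real.exp (-(-t * c) + (N1 : ℝ) * ((2 / 3) * (-t + t ^ 2))) := by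
          rw [← Real.exp_nat_mul, ← Real.exp_add]
      _ ≤ Real.exp (-(n : ℝ) / 576) := by
          apply Real.exp_le_exp.2
          have : -(-t * c) + (N1 : ℝ) * ((2 / 3) * (-t + t ^ 2))
              = -(d / 3) * t + (2 / 3) * b * t ^ 2 := by
            have : (N1 : ℝ) = b := hbdef.symm
            rw [this, hcdef, hddef]; ring
          linarith [hcore, le_of_eq this]
  -- union bound
  have hsub : {ω | W' ω ≤ W'' ω} ⊆ {ω | c ≤ (W'' ω : ℝ)} ∪ {ω | (W' ω : ℝ) ≤ c} := by
    intro ω hω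
    simp only [Set.mem_setOf_eq] at hω
    by_cases h : c ≤ (W'' ω : ℝ)
    · exact Or.inl h
    · right
      push_neg at h
      have : (W' ω : ℝ) ≤ (W'' ω : ℝ) := by exact_mod_cast hω
      simp only [Set.mem_setOf_eq]; linarith
  calc ℙ {ω | W' ω ≤ W'' ω} ≤ ℙ ({ω | c ≤ (W'' ω : ℝ)} ∪ {ω | (W' ω : ℝ) ≤ c}) :=
        measure_mono hsub
    _ ≤ ℙ {ω | c ≤ (W'' ω : ℝ)} + ℙ {ω | (W' ω : ℝ) ≤ c} := measure_union_le _ _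
    _ ≤ ENNReal.ofReal (Real.exp (-(n : ℝ) / 576)) + ENNReal.ofReal (Real.exp (-(n : ℝ) / 576)) :=
        add_le_add hB1 hB2
    _ = ENNReal.ofReal (2 * Real.exp (-(n : ℝ) / 576)) := by
        rw [← ENNReal.ofReal_add (Real.exp_pos _).le (Real.exp_pos _).le]
        ring_nf
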